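/- If there exists a universal set Y ⊆ ℂ, then there exists a Wetzel family. -/

import Mathlib

open Cardinal Set Filter Topology

def IsUniversal (Y : Set ℂ) : Prop :=
  Cardinal.mk Y < Cardinal.continuum ∧
    ∀ X : Set ℂ, Cardinal.mk X < Cardinal.continuum →
      ∃ f : ℂ → ℂ, Differentiable ℂ f ∧ (∀ c : ℂ, f ≠ fun _ => c) ∧ f '' X ⊆ Y

def IsWetzel (F : Set (ℂ → ℂ)) : Prop :=
  (∀ f ∈ F, Differentiable ℂ f) ∧
    ∀ z : ℂ, Cardinal.mk ((fun f : ℂ → ℂ => f z) '' F) < Cardinal.mk F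

/-- A non-constant entire function has countable fibers. -/
lemma countable_fiber {g : ℂ → ℂ} (hd : Differentiable ℂ g)
    (hnc : ∀ c : ℂ, g ≠ fun _ => c) (y : ℂ) : (g ⁻¹' {y}).Countable := by
  set Z : Set ℂ := g ⁻¹' {y} with hZ
  have han : ∀ z : ℂ, AnalyticAt ℂ (fun w => g w - y) z := fun z =>
    (hd.analyticAt z).sub analyticAt_const
  have hiso : ∀ z ∈ Z, ∀ᶠ w in 𝓝[≠] z, g w - y ≠ 0 := by
    intro z hz
    rcases (han z).eventually_eq_zero_or_eventually_ne_zero with h | h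
    · exfalso
      have h1 : AnalyticOnNhd ℂ (fun w => g w - y) univ := fun w _ => han w
      have h2 : AnalyticOnNhd ℂ (fun _ : ℂ => (0 : ℂ)) univ := fun w _ => analyticAt_const
      have heq := h1.eqOn_of_preconnected_of_eventuallyEq h2 isPreconnected_univ
        (mem_univ z) h
      apply hnc y
      funext w
      have := heq (mem_univ w)
      simpa [sub_eq_zero] using this
    · exact h
  have hdisc : DiscreteTopology Z := by
    rw [discreteTopology_subtype_iff]
    intro z hz
    have hmem : {w : ℂ | g w - y ≠ 0} ∈ 𝓝[≠] z := hiso z hz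
    rw [← empty_mem_iff_bot]
    have : {w : ℂ | g w - y ≠ 0} ∩ Z ∈ 𝓝[≠] z ⊓ 𝓟 Z :=
      inter_mem_inf hmem (mem_principal_self Z)
    convert this using 1
    rw [eq_comm, ← subset_empty_iff]
    rintro w ⟨h1, h2⟩
    exact absurd (sub_eq_zero_of_eq h2) h1
  have : Countable Z := countable_of_Lindelof_of_discrete
  exact countable_coe_iff.mp this

/-- Key extension lemma: we can find a suitable function avoiding a small set. -/
lemma key_lemma {Y : Set ℂ} (hY : IsUniversal Y) (S : Set (ℂ → ℂ))
    (hS : #S < 𝔠) (hSg : ∀ g ∈ S, Differentiable ℂ g ∧ ∀ c : ℂ, g ≠ fun _ => c)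
    (X : Set ℂ) (hX : #X < 𝔠) :
    ∃ g : ℂ → ℂ, Differentiable ℂ g ∧ (∀ c : ℂ, g ≠ fun _ => c) ∧ g '' X ⊆ Y ∧ g ∉ S := by
  classical
  set B : Set ℂ := ⋃ g ∈ S, g ⁻¹' Y with hB
  have hfib : ∀ g : S, #((g : ℂ → ℂ) ⁻¹' Y : Set ℂ) ≤ #Y * ℵ₀ := by
    rintro ⟨g, hg⟩
    have hrw : g ⁻¹' Y = ⋃ y : Y, g ⁻¹' {(y : ℂ)} := by ext w; simp
    rw [hrw]
    refine le_trans (mk_iUnion_le _) (mul_le_mul_right ?_ _)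
    exact ciSup_le' fun y =>
      (countable_fiber (hSg g hg).1 (hSg g hg).2 y).le_aleph0
  have hBcard : #B < 𝔠 := by
    have h1 : #B ≤ #S * ⨆ g : S, #((g : ℂ → ℂ) ⁻¹' Y : Set ℂ) := by
      rw [hB, biUnion_eq_iUnion]; exact mk_iUnion_le _
    have h2 : #S * ⨆ g : S, #((g : ℂ → ℂ) ⁻¹' Y : Set ℂ) ≤ #S * (#Y * ℵ₀) :=
      mul_le_mul_right (ciSup_le' hfib) _
    refine lt_of_le_of_lt (h1.trans h2) (mul_lt_of_lt aleph0_le_continuum hS ?_)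
    exact mul_lt_of_lt aleph0_le_continuum hY.1 aleph0_lt_continuum
  have hcompl : ∃ t : ℂ, t ∉ B := by
    by_contra h
    push_neg at h
    have : (univ : Set ℂ) ⊆ B := fun t _ => h t
    have := (mk_le_mk_of_subset this).trans_lt hBcard
    rw [mk_univ_complex] at this
    exact lt_irrefl _ this
  obtain ⟨t, ht⟩ := hcompl
  have hXt : #(insert t X : Set ℂ) < 𝔠 := by
    refine lt_of_le_of_lt (mk_insert_le) ?_
    exact add_lt_of_lt aleph0_le_continuum hX (one_lt_aleph0.trans aleph0_lt_continuum)
  obtain ⟨g, hg1, hg2, hg3⟩ := hY.2 (insert t X) hXt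
  refine ⟨g, hg1, hg2, fun w hw => hg3 (image_mono (f := g) (subset_insert _ _) hw), ?_⟩
  intro hgS
  apply ht
  rw [hB]
  refine mem_biUnion hgS ?_
  exact hg3 ⟨t, mem_insert _ _, rfl⟩

theorem wetzel_of_universal (Y : Set ℂ) (hY : IsUniversal Y) :
    ∃ F : Set (ℂ → ℂ), IsWetzel F := by
  classical
  obtain ⟨r, wo, hr⟩ := Cardinal.ord_eq ℂ
  haveI := wo
  have hseg : ∀ z : ℂ, #{w : ℂ | r w z} < 𝔠 := by
    intro z
    have h1 := Cardinal.card_typein_lt (r := r) z hr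
    rw [mk_complex] at h1
    exact h1
  -- transfinite recursion
  let P : (ℂ → ℂ) → Prop := fun g => Differentiable ℂ g ∧ ∀ c : ℂ, g ≠ fun _ => c
  have wf : WellFounded r := wo.wf
  let step : ∀ z : ℂ, (∀ w, r w z → {g : ℂ → ℂ // P g}) → {g : ℂ → ℂ // P g} :=
    fun z IH =>
      let S : Set (ℂ → ℂ) := Set.range (fun w : {w // r w z} => (IH w.1 w.2).1)
      have hS : #S < 𝔠 := lt_of_le_of_lt mk_range_le (hseg z)
      have hSg : ∀ g ∈ S, Differentiable ℂ g ∧ ∀ c : ℂ, g ≠ fun _ => c := by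
        rintro g ⟨w, rfl⟩; exact (IH w.1 w.2).2
      ⟨(key_lemma hY S hS hSg {w : ℂ | r w z} (hseg z)).choose,
        (key_lemma hY S hS hSg {w : ℂ | r w z} (hseg z)).choose_spec.1,
        (key_lemma hY S hS hSg {w : ℂ | r w z} (hseg z)).choose_spec.2.1⟩
  let f : ℂ → {g : ℂ → ℂ // P g} := wf.fix step
  have hfix : ∀ z, f z = step z (fun w _ => f w) := fun z => wf.fix_eq step z
  -- properties
  have hmaps : ∀ z w : ℂ, r w z → (f z).1 w ∈ Y := by
    intro z w hw
    have := (key_lemma hY _ (lt_of_le_of_lt mk_range_le (hseg z))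
      (by rintro g ⟨v, rfl⟩; exact (f v.1).2) {w : ℂ | r w z} (hseg z)).choose_spec.2.2.1
    have hz : (f z).1 = (key_lemma hY
        (Set.range (fun v : {v // r v z} => (f v.1).1))
        (lt_of_le_of_lt mk_range_le (hseg z))
        (by rintro g ⟨v, rfl⟩; exact (f v.1).2)
        {w : ℂ | r w z} (hseg z)).choose := by
      rw [hfix z]
    rw [hz]
    exact this ⟨w, hw, rfl⟩
  have hne : ∀ z w : ℂ, r w z → (f z).1 ≠ (f w).1 := by
    intro z w hw
    have hnotmem := (key_lemma hY
        (Set.range (fun v : {v // r v z} => (f v.1).1))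
        (lt_of_le_of_lt mk_range_le (hseg z))
        (by rintro g ⟨v, rfl⟩; exact (f v.1).2)
        {w : ℂ | r w z} (hseg z)).choose_spec.2.2.2
    have hz : (f z).1 = (key_lemma hY
        (Set.range (fun v : {v // r v z} => (f v.1).1))
        (lt_of_le_of_lt mk_range_le (hseg z))
        (by rintro g ⟨v, rfl⟩; exact (f v.1).2)
        {w : ℂ | r w z} (hseg z)).choose := by
      rw [hfix z]
    intro heq
    apply hnotmem
    rw [← hz, heq]
    exact ⟨⟨w, hw⟩, rfl⟩
  have hinj : Function.Injective (fun z : ℂ => (f z).1) := by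
    intro z w h
    by_contra hzw
    rcases trichotomous_of r z w with h1 | h1 | h1
    · exact hne w z h1 h.symm
    · exact hzw h1
    · exact hne z w h1 h
  refine ⟨Set.range (fun z : ℂ => (f z).1), ?_, ?_⟩
  · rintro g ⟨z, rfl⟩; exact (f z).2.1
  · intro z
    have hcardF : #(Set.range (fun z : ℂ => (f z).1)) = 𝔠 := by
      rw [mk_range_eq _ hinj, mk_complex]
    rw [hcardF]
    -- image at z is contained in Y ∪ image of small set
    have hsub : (fun g : ℂ → ℂ => g z) '' (Set.range (fun w : ℂ => (f w).1)) ⊆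
        Y ∪ (fun w : ℂ => (f w).1 z) '' (insert z {w : ℂ | r w z}) := by
      rintro v ⟨g, ⟨w, rfl⟩, rfl⟩
      rcases trichotomous_of r z w with h1 | h1 | h1
      · exact Or.inl (hmaps w z h1)
      · exact Or.inr ⟨w, by simp [h1], rfl⟩
      · exact Or.inr ⟨w, Or.inr h1, rfl⟩
    refine lt_of_le_of_lt (mk_le_mk_of_subset hsub) ?_
    refine lt_of_le_of_lt (mk_union_le _ _) ?_
    refine add_lt_of_lt aleph0_le_continuum hY.1 ?_
    refine lt_of_le_of_lt (mk_image_le) ?_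
    refine lt_of_le_of_lt (mk_insert_le) ?_
    exact add_lt_of_lt aleph0_le_continuum (hseg z) (one_lt_aleph0.trans aleph0_lt_continuum)
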